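/- Let G be a finite group, p a prime, n ≥ 0, and X a G-set. Let A_p(G) be the Quillen category of elementary abelian p-subgroups of G and let F_X : A_p(G)^op → Set send E to X^E / C_G(E), the set of C_G(E)-orbits on the E-fixed points of X. Then the coend ∫_{A_p(G)} F_X evaluated at F_p^n is canonically isomorphic, as a set, to Y_n / G, where Y_n is the set of pairs (α : F_p^n → G a homomorphism, x ∈ X^{Im α}) and G acts by conjugation on α and translation on x. -/

import Mathlib

/-- A subgroup is elementary abelian (for the prime `p`) if it is commutative
and of exponent `p`. -/
def IsElemAbelian (p : ℕ) {G : Type} [Group G] (E : Subgroup G) : Prop :=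
  (∀ x ∈ E, ∀ y ∈ E, x * y = y * x) ∧ ∀ x ∈ E, x ^ p = 1

/-- The coend `∫_{A_p(G)} F_X` of `E ↦ X^E / C_G(E)` over the Quillen category,
evaluated at `F_p^n`, is canonically isomorphic to `Y_n / G`, where `Y_n`
consists of pairs `(α : F_p^n → G, x ∈ X^{Im α})` with `G` acting by
conjugation on `α` and translation on `x`. -/
theorem coend_FX_eq_Yn_mod_G (p n : ℕ) [Fact p.Prime]
    (G : Type) [Group G] [Finite G] (X : Type) [MulAction G X] :
    let V := Multiplicative (Fin n → ZMod p)
    let Fix : Subgroup G → Type := fun E => {x : X // ∀ g ∈ E, g • x = x}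
    let cRel : ∀ E : Subgroup G, Fix E → Fix E → Prop := fun E a b =>
      ∃ c ∈ Subgroup.centralizer (E : Set G), c • a.1 = b.1
    let I := Σ E : {E : Subgroup G // IsElemAbelian p E},
      Quot (cRel E.1) × (V →* E.1)
    let r : I → I → Prop := fun a b =>
      ∃ g : G, (∀ h ∈ a.1.1, g * h * g⁻¹ ∈ b.1.1) ∧
        (∀ v : V, ((b.2.2 v : G) = g * (a.2.2 v : G) * g⁻¹)) ∧
        ∃ (x : Fix b.1.1) (y : Fix a.1.1),
          a.2.1 = Quot.mk (cRel a.1.1) y ∧ b.2.1 = Quot.mk (cRel b.1.1) x ∧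
          y.1 = g⁻¹ • x.1
    let Yn := {q : (V →* G) × X // ∀ v : V, q.1 v • q.2 = q.2}
    let rG : Yn → Yn → Prop := fun y₁ y₂ =>
      ∃ g : G, (∀ v : V, y₂.1.1 v = g * y₁.1.1 v * g⁻¹) ∧ y₂.1.2 = g • y₁.1.2
    ∃ e : Quot r ≃ Quot rG,
      ∀ (E : {E : Subgroup G // IsElemAbelian p E}) (x : Fix E.1) (f : V →* E.1),
        e (Quot.mk r ⟨E, (Quot.mk (cRel E.1) x, f)⟩) =
          Quot.mk rG ⟨(E.1.subtype.comp f, x.1),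
            fun v => x.2 ((f v : G)) (f v).2⟩ := by
  intro V Fix cRel I r Yn rG
  classical
  -- the basic forward map
  let mkY : ∀ (E : {E : Subgroup G // IsElemAbelian p E}) (f : V →* E.1), Fix E.1 → Yn :=
    fun E f x => ⟨(E.1.subtype.comp f, x.1), fun v => x.2 (f v) (f v).2⟩
  have wd : ∀ (E : {E : Subgroup G // IsElemAbelian p E}) (f : V →* E.1)
      (x y : Fix E.1), cRel E.1 x y →
      Quot.mk rG (mkY E f x) = Quot.mk rG (mkY E f y) := by
    rintro E f x y ⟨c, hc, hcx⟩
    refine Quot.sound ⟨c, fun v => ?_, hcx.symm⟩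
    have h := (Subgroup.mem_centralizer_iff.mp hc) (f v) (f v).2
    show ((f v : G)) = c * (f v : G) * c⁻¹
    rw [← h, mul_inv_cancel_right]
  let toQ : I → Quot rG := fun a =>
    Quot.lift (fun x => Quot.mk rG (mkY a.1 a.2.2 x))
      (fun x y h => wd a.1 a.2.2 x y h) a.2.1
  have t2 : ∀ (E : {E : Subgroup G // IsElemAbelian p E}) (f : V →* E.1) (x : Fix E.1),
      toQ ⟨E, (Quot.mk (cRel E.1) x, f)⟩ = Quot.mk rG (mkY E f x) := fun E f x => rfl
  have hr : ∀ a b : I, r a b → toQ a = toQ b := by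
    rintro ⟨A, qa, fa⟩ ⟨B, qb, fb⟩ hab
    obtain ⟨g, hsub, hf, x, y, hqa, hqb, hyx⟩ := hab
    dsimp only at hsub hf hqa hqb hyx
    calc toQ ⟨A, (qa, fa)⟩ = toQ ⟨A, (Quot.mk (cRel A.1) y, fa)⟩ := by rw [hqa]
      _ = Quot.mk rG (mkY A fa y) := t2 A fa y
      _ = Quot.mk rG (mkY B fb x) := by
            refine Quot.sound ⟨g, fun v => hf v, ?_⟩
            show x.1 = g • y.1
            rw [hyx, smul_inv_smul]
      _ = toQ ⟨B, (Quot.mk (cRel B.1) x, fb)⟩ := (t2 B fb x).symm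
      _ = toQ ⟨B, (qb, fb)⟩ := by rw [hqb]
  let F : Quot r → Quot rG := Quot.lift toQ hr
  have t1 : ∀ a : I, F (Quot.mk r a) = toQ a := fun a => rfl
  -- the backward map
  have hEA : ∀ α : V →* G, IsElemAbelian p α.range := by
    intro α
    constructor
    · rintro _ ⟨u, rfl⟩ _ ⟨v, rfl⟩
      rw [← map_mul, ← map_mul, mul_comm]
    · rintro _ ⟨u, rfl⟩
      rw [← map_pow]
      have hu : u ^ p = 1 := by
        have h0 : (u ^ p).toAdd = 0 := by
          rw [toAdd_pow]
          funext i
          show p • (u.toAdd i) = 0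
          rw [nsmul_eq_mul, ZMod.natCast_self, zero_mul]
        exact Multiplicative.toAdd.injective h0
      rw [hu, map_one]
  let toI : Yn → I := fun q =>
    ⟨⟨(q.1.1).range, hEA q.1.1⟩,
      (Quot.mk _ ⟨q.1.2, by rintro _ ⟨v, rfl⟩; exact q.2 v⟩, (q.1.1).rangeRestrict)⟩
  have hrG : ∀ a b : Yn, rG a b → Quot.mk r (toI a) = Quot.mk r (toI b) := by
    rintro ⟨⟨α₁, x₁⟩, h₁⟩ ⟨⟨α₂, x₂⟩, h₂⟩ ⟨g, hα, hx⟩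
    refine Quot.sound ⟨g, ?_, fun v => hα v, ⟨x₂, ?_⟩, ⟨x₁, ?_⟩, rfl, rfl, ?_⟩
    · rintro _ ⟨v, rfl⟩
      exact ⟨v, hα v⟩
    · rintro _ ⟨v, rfl⟩; exact h₂ v
    · rintro _ ⟨v, rfl⟩; exact h₁ v
    · exact (inv_smul_eq_iff.mpr hx).symm
  let Ψ : Quot rG → Quot r := Quot.lift (fun q => Quot.mk r (toI q)) hrG
  have t3 : ∀ q : Yn, Ψ (Quot.mk rG q) = Quot.mk r (toI q) := fun q => rfl
  have t4 : ∀ q : Yn, toQ (toI q) =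
      Quot.mk rG (mkY ⟨(q.1.1).range, hEA q.1.1⟩ (q.1.1).rangeRestrict
        ⟨q.1.2, by rintro _ ⟨v, rfl⟩; exact q.2 v⟩) := fun q => rfl
  have linv : ∀ a : Quot r, Ψ (F a) = a := by
    refine Quot.ind ?_
    rintro ⟨E, qa, f⟩
    induction qa using Quot.ind with
    | _ x =>
      refine (((congrArg Ψ ((t1 ⟨E, (Quot.mk (cRel E.1) x, f)⟩).trans (t2 E f x))).trans (t3 (mkY E f x))).trans ?_)
      refine Quot.sound ⟨1, ?_, fun v => ?_, x, ⟨x.1, ?_⟩, rfl, rfl, ?_⟩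
      · rintro _ ⟨v, rfl⟩
        simp only [one_mul, inv_one, mul_one]
        exact (f v).2
      · show (f v : G) = 1 * ((E.1.subtype.comp f).rangeRestrict v : G) * 1⁻¹
        simp [MonoidHom.rangeRestrict]
        rfl
      · rintro _ ⟨v, rfl⟩
        exact x.2 (f v) (f v).2
      · show x.1 = (1 : G)⁻¹ • x.1
        simp
  have rinv : ∀ b : Quot rG, F (Ψ b) = b := by
    refine Quot.ind ?_
    intro q
    refine ((congrArg F (t3 q)).trans ((t1 (toI q)).trans ((t4 q).trans ?_)))
    refine Quot.sound ⟨1, fun v => ?_, ?_⟩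
    · show q.1.1 v = 1 * ((q.1.1).range.subtype ((q.1.1).rangeRestrict v) : G) * 1⁻¹
      simp [MonoidHom.rangeRestrict]
      rfl
    · show q.1.2 = (1 : G) • q.1.2
      simp
  refine ⟨⟨F, Ψ, linv, rinv⟩, fun E x f => ?_⟩
  exact ((t1 ⟨E, (Quot.mk (cRel E.1) x, f)⟩).trans (t2 E f x))
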